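/- Let S be a finite set, r : S → [0,1] with r(ℓ) > 0 for all ℓ ∈ I, where I ⊆ S. Define r_I : S → ℝ by r_I(ℓ) = 1 if ℓ ∈ I and r_I(ℓ) = r(ℓ) otherwise. Then for every subset L of S with I ⊆ L, the normalized quantity (∏_{ℓ ∈ L} r(ℓ) · ∏_{ℓ ∈ S \ L} (1 - r(ℓ))) / (∑_{J : I ⊆ J ⊆ S} ∏_{ℓ ∈ J} r(ℓ) · ∏_{ℓ ∈ S \ J} (1 - r(ℓ))) equals ∏_{ℓ ∈ L} r_I(ℓ) · ∏_{ℓ ∈ S \ L} (1 - r_I(ℓ)). -/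

import Mathlib

open Finset

theorem stmt_2 {α : Type*} [DecidableEq α] (S I L : Finset α) (r : α → ℝ)
    (hIS : I ⊆ S) (hLS : L ⊆ S) (hIL : I ⊆ L)
    (hr : ∀ ℓ ∈ S, r ℓ ∈ Set.Icc (0 : ℝ) 1) (hrI : ∀ ℓ ∈ I, 0 < r ℓ) :
    ((∏ ℓ ∈ L, r ℓ) * (∏ ℓ ∈ S \ L, (1 - r ℓ))) /
      (∑ J ∈ S.powerset.filter (fun J => I ⊆ J),
        (∏ ℓ ∈ J, r ℓ) * (∏ ℓ ∈ S \ J, (1 - r ℓ)))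
    = (∏ ℓ ∈ L, (if ℓ ∈ I then (1 : ℝ) else r ℓ)) *
      (∏ ℓ ∈ S \ L, (1 - (if ℓ ∈ I then (1 : ℝ) else r ℓ))) := by
  have hIpos : (0 : ℝ) < ∏ ℓ ∈ I, r ℓ := Finset.prod_pos hrI
  -- denominator equals ∏_{ℓ∈I} r ℓ
  have hden : (∑ J ∈ S.powerset.filter (fun J => I ⊆ J),
      (∏ ℓ ∈ J, r ℓ) * (∏ ℓ ∈ S \ J, (1 - r ℓ))) = ∏ ℓ ∈ I, r ℓ := by
    have hb : (∑ J ∈ S.powerset.filter (fun J => I ⊆ J),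
        (∏ ℓ ∈ J, r ℓ) * (∏ ℓ ∈ S \ J, (1 - r ℓ)))
        = ∑ K ∈ (S \ I).powerset,
          (∏ ℓ ∈ I, r ℓ) * ((∏ ℓ ∈ K, r ℓ) * (∏ ℓ ∈ (S \ I) \ K, (1 - r ℓ))) := by
      refine Finset.sum_nbij' (fun J => J \ I) (fun K => K ∪ I) ?_ ?_ ?_ ?_ ?_
      · intro J hJ
        simp only [mem_filter, mem_powerset] at hJ ⊢
        exact sdiff_subset_sdiff hJ.1 (Finset.Subset.refl _)
      · intro K hK
        simp only [mem_powerset] at hK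
        simp only [mem_filter, mem_powerset]
        constructor
        · exact Finset.union_subset (hK.trans (Finset.sdiff_subset)) hIS
        · exact Finset.subset_union_right
      · intro J hJ
        simp only [mem_filter, mem_powerset] at hJ
        exact Finset.sdiff_union_of_subset hJ.2
      · intro K hK
        simp only [mem_powerset] at hK
        ext x
        simp only [mem_sdiff, mem_union]
        constructor
        · rintro ⟨hx | hx, hxI⟩
          · exact hx
          · exact absurd hx hxI
        · intro hx
          exact ⟨Or.inl hx, fun hxI => (Finset.mem_sdiff.mp (hK hx)).2 hxI⟩
      · intro J hJ
        simp only [mem_filter, mem_powerset] at hJ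
        have h1 : (∏ ℓ ∈ J, r ℓ) = (∏ ℓ ∈ J \ I, r ℓ) * ∏ ℓ ∈ I, r ℓ :=
          (Finset.prod_sdiff hJ.2).symm
        have h2 : S \ J = (S \ I) \ (J \ I) := by
          ext x
          simp only [mem_sdiff]
          constructor
          · intro ⟨hxS, hxJ⟩
            exact ⟨⟨hxS, fun hxI => hxJ (hJ.2 hxI)⟩, fun h => hxJ h.1⟩
          · intro ⟨⟨hxS, hxI⟩, h⟩
            exact ⟨hxS, fun hxJ => h ⟨hxJ, hxI⟩⟩
        rw [h1, h2]; ring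
    rw [hb, ← Finset.mul_sum, ← Finset.prod_add]
    simp
  rw [hden]
  -- rewriting the RHS
  have hR1 : (∏ ℓ ∈ L, (if ℓ ∈ I then (1 : ℝ) else r ℓ)) = ∏ ℓ ∈ L \ I, r ℓ := by
    rw [← Finset.prod_sdiff hIL]
    have h1 : ∏ ℓ ∈ I, (if ℓ ∈ I then (1:ℝ) else r ℓ) = 1 :=
      Finset.prod_eq_one (fun x hx => if_pos hx)
    have h2 : ∏ ℓ ∈ L \ I, (if ℓ ∈ I then (1:ℝ) else r ℓ) = ∏ ℓ ∈ L \ I, r ℓ :=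
      Finset.prod_congr rfl (fun x hx => if_neg (Finset.mem_sdiff.mp hx).2)
    rw [h1, h2, mul_one]
  have hR2 : (∏ ℓ ∈ S \ L, (1 - (if ℓ ∈ I then (1 : ℝ) else r ℓ)))
      = ∏ ℓ ∈ S \ L, (1 - r ℓ) := by
    refine Finset.prod_congr rfl (fun x hx => ?_)
    simp only [Finset.mem_sdiff] at hx
    rw [if_neg (fun hxI => hx.2 (hIL hxI))]
  rw [hR1, hR2]
  have hL : (∏ ℓ ∈ L, r ℓ) = (∏ ℓ ∈ L \ I, r ℓ) * ∏ ℓ ∈ I, r ℓ :=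
    (Finset.prod_sdiff hIL).symm
  rw [hL]
  field_simp
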